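/- Let (Q,q,k) be a regular local ring, I1, I2 ⊆ q^2 q-primary ideals, I = I1 ∩ I2, and b = min{ i ≥ 1 : q^{i+1} ∩ I2 ⊆ I1 }. For every y ∈ (q^b ∩ I2) \ I1, the coset y + I is a socle element of R = Q/I of valuation exactly b. -/

import Mathlib

open IsLocalRing

/-- A Noetherian local ring is regular if its maximal ideal is generated by a
regular sequence. -/
def IsRegularLocal (Q : Type*) [CommRing Q] [IsLocalRing Q] : Prop :=
  ∃ L : List Q, RingTheory.Sequence.IsRegular Q L ∧
    Ideal.span {x | x ∈ L} = maximalIdeal Q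

/-- Let `(Q,q,k)` be regular local, `I1, I2 ⊆ q^2` `q`-primary
ideals, `I = I1 ∩ I2`, and `b = min { i ≥ 1 : q^{i+1} ∩ I2 ⊆ I1 }`. For every
`y ∈ (q^b ∩ I2) \ I1`, the coset `y + I` is a socle element of `R = Q/I` of
valuation exactly `b`.  (The socle and valuation conditions are expressed in
`Q`: `m·(y+I) = 0` means `q y ⊆ I`, and `y + I ∈ m^i` means `y ∈ q^i + I`.) -/
theorem stmt2 (Q : Type*) [CommRing Q] [IsLocalRing Q] [IsNoetherianRing Q]
    (hreg : IsRegularLocal Q)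
    (I1 I2 : Ideal Q)
    (h1p : I1.IsPrimary) (h1r : I1.radical = maximalIdeal Q)
    (h2p : I2.IsPrimary) (h2r : I2.radical = maximalIdeal Q)
    (h1q2 : I1 ≤ maximalIdeal Q ^ 2) (h2q2 : I2 ≤ maximalIdeal Q ^ 2)
    (b : ℕ)
    (hb : b = sInf {i : ℕ | 1 ≤ i ∧ maximalIdeal Q ^ (i + 1) ⊓ I2 ≤ I1}) :
    ∀ y : Q, y ∈ maximalIdeal Q ^ b ⊓ I2 → y ∉ I1 →
      (∀ z ∈ maximalIdeal Q, z * y ∈ I1 ⊓ I2) ∧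
      sSup {i : ℕ | y ∈ maximalIdeal Q ^ i ⊔ (I1 ⊓ I2)} = b := by
  intro y hy hy1
  obtain ⟨hyb, hy2⟩ := hy
  -- the defining set of `b` is nonempty, hence `b` belongs to it
  have hfg : (Ideal.radical I1).FG := IsNoetherian.noetherian _
  obtain ⟨n, hn⟩ := Ideal.exists_radical_pow_le_of_fg I1 hfg
  rw [h1r] at hn
  have hSne : {i : ℕ | 1 ≤ i ∧ maximalIdeal Q ^ (i + 1) ⊓ I2 ≤ I1}.Nonempty := by
    refine ⟨max n 1, le_max_right _ _, ?_⟩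
    exact le_trans (le_trans inf_le_left (Ideal.pow_le_pow_right (by omega))) hn
  have hbS : b ∈ {i : ℕ | 1 ≤ i ∧ maximalIdeal Q ^ (i + 1) ⊓ I2 ≤ I1} := by
    rw [hb]; exact Nat.sInf_mem hSne
  -- key: if y ∈ q^i + I then i ≤ b
  have key : ∀ i : ℕ, y ∈ maximalIdeal Q ^ i ⊔ (I1 ⊓ I2) → i ≤ b := by
    intro i hi
    by_contra hib
    push_neg at hib
    have hi' : y ∈ maximalIdeal Q ^ (b + 1) ⊔ (I1 ⊓ I2) :=
      SetLike.le_def.mp (sup_le_sup_right (Ideal.pow_le_pow_right (show b + 1 ≤ i by omega)) (I1 ⊓ I2)) hi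
    obtain ⟨x, hx, w, hw, hxw⟩ := Submodule.mem_sup.mp hi'
    have hxI2 : x ∈ I2 := by
      have : x = y - w := by linear_combination hxw
      rw [this]
      exact Ideal.sub_mem _ hy2 hw.2
    have hxI1 : x ∈ I1 := hbS.2 ⟨hx, hxI2⟩
    exact hy1 (hxw ▸ Ideal.add_mem _ hxI1 hw.1)
  constructor
  · intro z hz
    have hz2 : z * y ∈ I2 := Ideal.mul_mem_left _ z hy2
    have hzq : z * y ∈ maximalIdeal Q ^ (b + 1) := by
      rw [pow_succ']
      exact Ideal.mul_mem_mul hz hyb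
    exact ⟨hbS.2 ⟨hzq, hz2⟩, hz2⟩
  · apply le_antisymm
    · exact csSup_le ⟨0, by simp⟩
        (fun i hi => key i hi)
    · exact le_csSup ⟨b, fun i hi => key i hi⟩ (Submodule.mem_sup_left hyb)
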